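/- Let $K$ be a finitely generated (as a ring) ring and $I$ a two-sided ideal of $K$ such that the additive group of $K/I$ is finitely generated. Then $I$ is a finitely generated ring. -/

import Mathlib

/-- A (not necessarily unital) ring `K` is finitely separable if every element `a`
lying outside a subring `A` can be separated from `A` by a homomorphism to a finite ring. -/
def IsFinSep (K : Type) [NonUnitalRing K] : Prop :=
  ∀ (a : K) (A : NonUnitalSubring K), a ∉ A →
    ∃ (F : Type) (_ : NonUnitalRing F) (_ : Finite F),
      ∃ φ : K →ₙ+* F, φ a ∉ ⇑φ '' (A : Set K)

/-- `ppow a n = a ^ (n + 1)`, the positive powers of `a` in a non-unital ring. -/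
def ppow {K : Type} [NonUnitalRing K] (a : K) : ℕ → K
  | 0 => a
  | n + 1 => ppow a n * a

/-- Evaluation of an integer polynomial (whose constant term is ignored, hence
meaningful for polynomials with zero constant term) at an element of a non-unital ring. -/
def evalnc {K : Type} [NonUnitalRing K] (p : Polynomial ℤ) (a : K) : K :=
  ∑ i ∈ Finset.range p.natDegree, p.coeff (i + 1) • ppow a i

open Pointwise

private lemma sg_closure_induction_right {M : Type*} [Semigroup M] {s : Set M} {p : M → Prop}
    (base : ∀ x ∈ s, p x) (step : ∀ w, p w → ∀ x ∈ s, p (w * x)) :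
    ∀ w ∈ Subsemigroup.closure s, p w := by
  intro w hw
  suffices h : p w ∧ ∀ v, p v → p (v * w) from h.1
  induction hw using Subsemigroup.closure_induction with
  | mem x hx => exact ⟨base x hx, fun v hv => step v hv x hx⟩
  | mul a b ha hb pa pb => exact ⟨pb.2 a pa.1, fun v hv => mul_assoc v a b ▸ pb.2 _ (pa.2 v hv)⟩

private lemma fin_sub_closure {M : Type*} [AddGroup M] {S : Set M} {x : M}
    (hx : x ∈ AddSubgroup.closure S) :
    ∃ F : Finset M, ↑F ⊆ S ∧ x ∈ AddSubgroup.closure (F : Set M) := by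
  classical
  induction hx using AddSubgroup.closure_induction with
  | mem x hx => exact ⟨{x}, by simpa using hx, AddSubgroup.subset_closure (by simp)⟩
  | zero => exact ⟨∅, by simp, zero_mem _⟩
  | add a b ha hb pa pb =>
      obtain ⟨F1, h1, m1⟩ := pa; obtain ⟨F2, h2, m2⟩ := pb
      refine ⟨F1 ∪ F2, by simp [Finset.coe_union, Set.union_subset_iff]; exact ⟨h1, h2⟩, ?_⟩
      exact add_mem (AddSubgroup.closure_mono (by simp [Finset.coe_union]) m1)
        (AddSubgroup.closure_mono (by simp [Finset.coe_union]) m2)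
  | neg a ha pa => obtain ⟨F, h, m⟩ := pa; exact ⟨F, h, neg_mem m⟩

private lemma fg_of_le_fg {M : Type*} [AddCommGroup M] {N P : Submodule ℤ M}
    (hP : P.FG) (h : N ≤ P) : N.FG := by
  haveI := isNoetherian_of_fg_of_noetherian P hP
  have h1 : (N.comap P.subtype).FG := IsNoetherian.noetherian _
  have h2 := h1.map P.subtype
  rwa [Submodule.map_comap_subtype, inf_eq_right.mpr h] at h2

/-- If `K` is a finitely generated ring and `I` a two-sided ideal such that the additive
group of `K/I` is finitely generated, then `I` is a finitely generated ring. -/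
theorem stmt12 (K : Type) [NonUnitalRing K]
    (hK : ∃ s : Finset K, NonUnitalSubring.closure (s : Set K) = ⊤)
    (I : NonUnitalSubring K)
    (hI : ∀ x ∈ I, ∀ y : K, x * y ∈ I ∧ y * x ∈ I)
    (hq : AddGroup.FG (K ⧸ I.toAddSubgroup)) :
    ∃ t : Finset I, NonUnitalSubring.closure (t : Set I) = ⊤ := by
  classical
  obtain ⟨s, hs⟩ := hK
  set Mon : Set K := (Subsemigroup.closure (s : Set K) : Set K) with hMon
  set π : K →+ K ⧸ I.toAddSubgroup := QuotientAddGroup.mk' I.toAddSubgroup with hπdef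
  have hπker : ∀ k : K, π k = 0 → k ∈ I := by
    intro k hk
    have : k ∈ (QuotientAddGroup.mk' I.toAddSubgroup).ker := by rwa [AddMonoidHom.mem_ker]
    rwa [QuotientAddGroup.ker_mk'] at this
  -- every element lies in the additive closure of monomials
  have hmon : ∀ k : K, k ∈ AddSubgroup.closure Mon := by
    intro k
    have hk : k ∈ NonUnitalSubring.closure (s : Set K) := hs ▸ trivial
    exact (NonUnitalSubring.mem_closure_iff).mp hk
  -- a finite set M of monomials whose image generates the quotient, containing s
  obtain ⟨Q, hQ⟩ := hq.out
  have key : ∀ q : K ⧸ I.toAddSubgroup, ∃ F : Finset K, ↑F ⊆ Mon ∧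
      q ∈ AddSubgroup.closure (π '' ↑F) := by
    intro q
    obtain ⟨k, rfl⟩ := QuotientAddGroup.mk'_surjective I.toAddSubgroup q
    obtain ⟨F, hF1, hF2⟩ := fin_sub_closure (hmon k)
    refine ⟨F, hF1, ?_⟩
    rw [← AddMonoidHom.map_closure]
    exact ⟨k, hF2, rfl⟩
  choose F hF1 hF2 using key
  set M : Finset K := s ∪ Q.biUnion F with hMdef
  have hsM : (s : Set K) ⊆ (M : Set K) := by
    intro x hx; simp [hMdef]; exact Or.inl hx
  have hMmon : (M : Set K) ⊆ Mon := by
    intro x hx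
    simp [hMdef] at hx
    rcases hx with hx | ⟨q, hq', hx⟩
    · exact Subsemigroup.subset_closure hx
    · exact hF1 q hx
  have hMgen : ∀ k : K, ∃ u ∈ AddSubgroup.closure (M : Set K), k - u ∈ I := by
    have htop : AddSubgroup.closure (π '' (M : Set K)) = ⊤ := by
      rw [eq_top_iff, ← hQ]
      rw [AddSubgroup.closure_le]
      intro q hq'
      refine AddSubgroup.closure_mono (Set.image_mono ?_) (hF2 q)
      intro x hx
      simp [hMdef]
      exact Or.inr ⟨q, hq', hx⟩
    intro k
    have : π k ∈ AddSubgroup.closure (π '' (M : Set K)) := by rw [htop]; trivial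
    rw [← AddMonoidHom.map_closure] at this
    obtain ⟨u, hu, huk⟩ := this
    refine ⟨u, hu, hπker _ ?_⟩
    rw [map_sub, huk, sub_self]
  -- the finitely generated additive world
  have hVfg : (Submodule.span ℤ ((M ∪ M * s : Finset K) : Set K)).FG := ⟨M ∪ M * s, rfl⟩
  have hUVm : ∀ u ∈ AddSubgroup.closure (M : Set K),
      u ∈ Submodule.span ℤ ((M ∪ M * s : Finset K) : Set K) := by
    intro u hu
    have h1 : AddSubgroup.closure (M : Set K) ≤
        (Submodule.span ℤ ((M ∪ M * s : Finset K) : Set K)).toAddSubgroup := by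
      rw [AddSubgroup.closure_le]
      intro x hx
      exact Submodule.subset_span (by simp [Finset.coe_union]; exact Or.inl hx)
    exact h1 hu
  have hMsV : ∀ m ∈ M, ∀ x ∈ s, m * x ∈ Submodule.span ℤ ((M ∪ M * s : Finset K) : Set K) := by
    intro m hm x hx
    refine Submodule.subset_span ?_
    simp only [Finset.coe_union, Set.mem_union, Finset.coe_mul]
    exact Or.inr (Set.mul_mem_mul hm hx)
  have hIVfg : (I.toAddSubgroup.toIntSubmodule ⊓
      Submodule.span ℤ ((M ∪ M * s : Finset K) : Set K)).FG :=
    fg_of_le_fg hVfg inf_le_right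
  obtain ⟨T₁, hT₁⟩ := hIVfg
  have hT₁mem : ∀ t ∈ T₁, t ∈ I ∧ t ∈ Submodule.span ℤ ((M ∪ M * s : Finset K) : Set K) := by
    intro t ht
    have := hT₁ ▸ Submodule.subset_span (R := ℤ) (M := K) (s := (T₁ : Set K)) ht
    exact ⟨this.1, this.2⟩
  have hIVT : ∀ x : K, x ∈ I → x ∈ Submodule.span ℤ ((M ∪ M * s : Finset K) : Set K) →
      x ∈ AddSubgroup.closure (T₁ : Set K) := by
    intro x h1 h2
    rw [← Submodule.span_int_eq_addSubgroupClosure, Submodule.mem_toAddSubgroup, hT₁]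
    exact ⟨h1, h2⟩
  -- the candidate generating set of I
  have hTI : ((T₁ ∪ T₁ * M : Finset K) : Set K) ⊆ (I : Set K) := by
    intro z hz
    simp only [Finset.coe_union, Set.mem_union, Finset.coe_mul, Set.mem_mul] at hz
    rcases hz with hz | ⟨a, ha, b, hb, rfl⟩
    · exact (hT₁mem z hz).1
    · exact (hI a (hT₁mem a ha).1 b).1
  have hJI : NonUnitalSubring.closure ((T₁ ∪ T₁ * M : Finset K) : Set K) ≤ I :=
    NonUnitalSubring.closure_le.mpr hTI
  have hspanT₁J : ∀ x ∈ AddSubgroup.closure (T₁ : Set K),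
      x ∈ NonUnitalSubring.closure ((T₁ ∪ T₁ * M : Finset K) : Set K) := by
    intro x hx
    have h1 : AddSubgroup.closure (T₁ : Set K) ≤
        (NonUnitalSubring.closure ((T₁ ∪ T₁ * M : Finset K) : Set K)).toAddSubgroup := by
      rw [AddSubgroup.closure_le]
      intro z hz
      exact NonUnitalSubring.subset_closure (by simp [Finset.coe_union]; exact Or.inl hz)
    exact h1 hx
  have hIVJ : ∀ x : K, x ∈ I → x ∈ Submodule.span ℤ ((M ∪ M * s : Finset K) : Set K) →
      x ∈ NonUnitalSubring.closure ((T₁ ∪ T₁ * M : Finset K) : Set K) :=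
    fun x h1 h2 => hspanT₁J x (hIVT x h1 h2)
  have hTmulU : ∀ t ∈ T₁, ∀ u ∈ AddSubgroup.closure (M : Set K),
      t * u ∈ NonUnitalSubring.closure ((T₁ ∪ T₁ * M : Finset K) : Set K) := by
    intro t ht u hu
    induction hu using AddSubgroup.closure_induction with
    | mem m hm =>
        refine NonUnitalSubring.subset_closure ?_
        simp only [Finset.coe_union, Set.mem_union, Finset.coe_mul]
        exact Or.inr (Set.mul_mem_mul ht hm)
    | zero => rw [mul_zero]; exact zero_mem _
    | add a b ha hb pa pb => rw [mul_add]; exact add_mem pa pb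
    | neg a ha pa => rw [mul_neg]; exact neg_mem pa
  have hsplit : ∀ k : K, k ∈ Submodule.span ℤ ((M ∪ M * s : Finset K) : Set K) →
      ∃ u ∈ AddSubgroup.closure (M : Set K),
        k - u ∈ NonUnitalSubring.closure ((T₁ ∪ T₁ * M : Finset K) : Set K) := by
    intro k hk
    obtain ⟨u, hu, hk'⟩ := hMgen k
    exact ⟨u, hu, hIVJ _ hk' (Submodule.sub_mem _ hk (hUVm u hu))⟩
  have hJright : ∀ j ∈ NonUnitalSubring.closure ((T₁ ∪ T₁ * M : Finset K) : Set K), ∀ x ∈ s,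
      j * x ∈ NonUnitalSubring.closure ((T₁ ∪ T₁ * M : Finset K) : Set K) := by
    intro j hj
    induction hj using NonUnitalSubring.closure_induction with
    | mem t ht =>
        intro x hx
        simp only [Finset.coe_union, Set.mem_union, Finset.coe_mul, Set.mem_mul] at ht
        rcases ht with ht | ⟨t₁, ht₁, m, hm, rfl⟩
        · exact hTmulU t ht x (AddSubgroup.subset_closure (hsM hx))
        · rw [mul_assoc]
          obtain ⟨u, hu, hj'⟩ := hsplit (m * x) (hMsV m hm x hx)
          have e : m * x = u + (m * x - u) := by abel
          rw [e, mul_add]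
          refine add_mem (hTmulU t₁ ht₁ u hu) (mul_mem ?_ hj')
          exact NonUnitalSubring.subset_closure (by
            simp only [Finset.coe_union, Set.mem_union]; exact Or.inl ht₁)
    | zero => intro x hx; rw [zero_mul]; exact zero_mem _
    | add a b ha hb pa pb => intro x hx; rw [add_mul]; exact add_mem (pa x hx) (pb x hx)
    | neg a ha pa => intro x hx; rw [neg_mul]; exact neg_mem (pa x hx)
    | mul a b ha hb pa pb => intro x hx; rw [mul_assoc]; exact mul_mem ha (pb x hx)
  -- every monomial decomposes as (element of U) + (element of J)
  have hmonUJ : ∀ w ∈ Subsemigroup.closure (s : Set K),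
      ∃ u ∈ AddSubgroup.closure (M : Set K),
        w - u ∈ NonUnitalSubring.closure ((T₁ ∪ T₁ * M : Finset K) : Set K) := by
    refine sg_closure_induction_right ?_ ?_
    · intro x hx
      exact ⟨x, AddSubgroup.subset_closure (hsM hx), by simpa using zero_mem (NonUnitalSubring.closure ((T₁ ∪ T₁ * M : Finset K) : Set K))⟩
    · intro w hw x hx
      obtain ⟨u, hu, hwJ⟩ := hw
      have hux : ∃ u' ∈ AddSubgroup.closure (M : Set K),
          u * x - u' ∈ NonUnitalSubring.closure ((T₁ ∪ T₁ * M : Finset K) : Set K) := by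
        clear hwJ
        induction hu using AddSubgroup.closure_induction with
        | mem m hm => exact hsplit (m * x) (hMsV m hm x hx)
        | zero => exact ⟨0, zero_mem _, by simpa using zero_mem (NonUnitalSubring.closure ((T₁ ∪ T₁ * M : Finset K) : Set K))⟩
        | add a b ha hb pa pb =>
            obtain ⟨ua, hua, ja⟩ := pa
            obtain ⟨ub, hub, jb⟩ := pb
            refine ⟨ua + ub, add_mem hua hub, ?_⟩
            have e : (a + b) * x - (ua + ub) = (a * x - ua) + (b * x - ub) := by
              rw [add_mul]; abel
            rw [e]; exact add_mem ja jb
        | neg a ha pa =>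
            obtain ⟨ua, hua, ja⟩ := pa
            refine ⟨-ua, neg_mem hua, ?_⟩
            have e : (-a) * x - (-ua) = -(a * x - ua) := by rw [neg_mul]; abel
            rw [e]; exact neg_mem ja
      obtain ⟨u', hu', h1⟩ := hux
      refine ⟨u', hu', ?_⟩
      have e : w * x - u' = (u * x - u') + (w - u) * x := by rw [sub_mul]; abel
      rw [e]; exact add_mem h1 (hJright _ hwJ x hx)
  -- I = J
  have h1 : ∀ k : K, ∃ u ∈ AddSubgroup.closure (M : Set K),
      k - u ∈ NonUnitalSubring.closure ((T₁ ∪ T₁ * M : Finset K) : Set K) := by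
    intro k
    induction hmon k using AddSubgroup.closure_induction with
    | mem w hw => exact hmonUJ w hw
    | zero => exact ⟨0, zero_mem _, by simpa using zero_mem (NonUnitalSubring.closure ((T₁ ∪ T₁ * M : Finset K) : Set K))⟩
    | add a b ha hb pa pb =>
        obtain ⟨ua, hua, ja⟩ := pa
        obtain ⟨ub, hub, jb⟩ := pb
        refine ⟨ua + ub, add_mem hua hub, ?_⟩
        have e : (a + b) - (ua + ub) = (a - ua) + (b - ub) := by abel
        rw [e]; exact add_mem ja jb
    | neg a ha pa =>
        obtain ⟨ua, hua, ja⟩ := pa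
        refine ⟨-ua, neg_mem hua, ?_⟩
        have e : (-a) - (-ua) = -(a - ua) := by abel
        rw [e]; exact neg_mem ja
  have hfinal : ∀ k ∈ I, k ∈ NonUnitalSubring.closure ((T₁ ∪ T₁ * M : Finset K) : Set K) := by
    intro k hk
    obtain ⟨u, hu, hkJ⟩ := h1 k
    have hkuI : k - u ∈ I := hJI hkJ
    have huI : u ∈ I := by
      have := I.sub_mem hk hkuI
      simpa using this
    have huJ := hIVJ u huI (hUVm u hu)
    have e : k = (k - u) + u := by abel
    rw [e]; exact add_mem hkJ huJ
  -- packaging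
  refine ⟨(T₁ ∪ T₁ * M : Finset K).subtype (· ∈ I), ?_⟩
  have hval : Subtype.val '' (((T₁ ∪ T₁ * M : Finset K).subtype (· ∈ I) : Finset I) : Set I)
      = ((T₁ ∪ T₁ * M : Finset K) : Set K) := by
    ext z
    constructor
    · rintro ⟨x, hx, rfl⟩
      exact Finset.mem_coe.mpr (Finset.mem_subtype.mp (Finset.mem_coe.mp hx))
    · intro hz
      exact ⟨⟨z, hTI hz⟩, Finset.mem_coe.mpr (Finset.mem_subtype.mpr (Finset.mem_coe.mp hz)), rfl⟩
  have hmap : NonUnitalSubring.map (NonUnitalSubringClass.subtype I)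
      (NonUnitalSubring.closure (((T₁ ∪ T₁ * M : Finset K).subtype (· ∈ I) : Finset I) : Set I))
      = NonUnitalSubring.closure ((T₁ ∪ T₁ * M : Finset K) : Set K) := by
    rw [NonUnitalRingHom.map_closure, NonUnitalSubringClass.coe_subtype, hval]
  rw [eq_top_iff]
  rintro x -
  have hx : (x : K) ∈ NonUnitalSubring.closure ((T₁ ∪ T₁ * M : Finset K) : Set K) :=
    hfinal x.1 x.2
  rw [← hmap] at hx
  obtain ⟨y, hy, hyx⟩ := NonUnitalSubring.mem_map.mp hx
  have : y = x := Subtype.ext hyx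
  exact this ▸ hy
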